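/- Let C ∈ ℝⁿˣⁿ be a cost matrix, ε > 0, and Φ₀, Φ₁ ∈ ℝⁿ be strictly positive vectors with equal total mass. If M* is a minimizer over the set {M ∈ ℝ₊ⁿˣⁿ : M 1 = Φ₀, Mᵀ 1 = Φ₁} of the function M ↦ trace(Cᵀ M) + ε Σᵢⱼ (mᵢⱼ log mᵢⱼ − mᵢⱼ + 1), and M* has strictly positive entries, then there exist vectors u₀, u₁ ∈ ℝⁿ with strictly positive entries such that M* = diag(u₀) K diag(u₁), where K = exp(−C/ε) entrywise. -/

import Mathlib

open Matrix

/-- Entropy term `𝒟(M) = ∑ᵢⱼ (mᵢⱼ log mᵢⱼ − mᵢⱼ + 1)`, with `0 log 0 = 0`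
(Mathlib's `Real.log 0 = 0` gives this convention). -/
noncomputable def entD {n : ℕ} (M : Matrix (Fin n) (Fin n) ℝ) : ℝ :=
  ∑ i, ∑ j, (M i j * Real.log (M i j) - M i j + 1)

/-- The objective written as a double sum. -/
lemma objEq' {n : ℕ} (C A : Matrix (Fin n) (Fin n) ℝ) (ε : ℝ) :
    Matrix.trace (Cᵀ * A) + ε * entD A
      = ∑ a, ∑ b, (C a b * A a b + ε * (A a b * Real.log (A a b) - A a b + 1)) := by
  have h1 : Matrix.trace (Cᵀ * A) = ∑ a, ∑ b, C a b * A a b := by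
    simp only [Matrix.trace, Matrix.diag, Matrix.mul_apply, Matrix.transpose_apply]
    exact Finset.sum_comm
  rw [h1, entD]
  simp only [Finset.mul_sum, ← Finset.sum_add_distrib]

lemma hpull' {n : ℕ} (c : Prop) [Decidable c] (X : Fin n → ℝ) :
    ∑ b, (if c then X b else 0) = if c then ∑ b, X b else 0 := by
  split_ifs <;> simp

/-- First-order optimality: the "potential" `λ a b = C a b + ε log M a b` of a strictly
positive minimizer satisfies the cycle condition. -/
lemma keylem' {n : ℕ} (C : Matrix (Fin n) (Fin n) ℝ) (ε : ℝ)
    (M : Matrix (Fin n) (Fin n) ℝ) (hpos : ∀ a b, 0 < M a b)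
    (hmin : ∀ N : Matrix (Fin n) (Fin n) ℝ, (∀ a b, 0 ≤ N a b) →
      N.mulVec 1 = M.mulVec 1 → Nᵀ.mulVec 1 = Mᵀ.mulVec 1 →
      Matrix.trace (Cᵀ * M) + ε * entD M ≤ Matrix.trace (Cᵀ * N) + ε * entD N)
    (i k j l : Fin n) :
    (C i j + ε * Real.log (M i j)) + (C k l + ε * Real.log (M k l))
      = (C i l + ε * Real.log (M i l)) + (C k j + ε * Real.log (M k j)) := by
  by_cases hik : i = k
  · subst hik; ring
  by_cases hjl : j = l
  · subst hjl; ring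
  set D : Fin n → Fin n → ℝ := fun a b =>
    (if a = i then (if b = j then (1:ℝ) else 0) - (if b = l then 1 else 0) else 0)
    + (if a = k then (if b = l then (1:ℝ) else 0) - (if b = j then 1 else 0) else 0) with hD
  have habs : ∀ a b, |D a b| ≤ 1 := by
    intro a b
    by_cases hai : a = i <;> by_cases hak : a = k
    · exact absurd (by rw [← hai, hak]) hik
    all_goals simp only [hD, hai, hak, if_true, if_false, add_zero, zero_add]
    all_goals first | (split_ifs <;> norm_num) | norm_num
  have hrow : ∀ a, ∑ b, D a b = 0 := by
    intro a
    simp [hD, Finset.sum_add_distrib, hpull', Finset.sum_sub_distrib, Finset.sum_ite_eq']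
  have hcol : ∀ b, ∑ a, D a b = 0 := by
    intro b
    simp [hD, Finset.sum_add_distrib, Finset.sum_ite_eq']
  have hDsum : ∀ f : Fin n → Fin n → ℝ,
      (∑ a, ∑ b, D a b * f a b) = f i j - f i l + (f k l - f k j) := by
    intro f
    simp [hD, add_mul, ite_mul, zero_mul, sub_mul, one_mul,
      Finset.sum_add_distrib, hpull', Finset.sum_sub_distrib, Finset.sum_ite_eq']
  -- minimum entry of M
  have hne : (Finset.univ : Finset (Fin n × Fin n)).Nonempty := ⟨(i, j), Finset.mem_univ _⟩
  set m : ℝ := Finset.univ.inf' hne (fun p : Fin n × Fin n => M p.1 p.2) with hmdef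
  have hm : 0 < m := (Finset.lt_inf'_iff hne).2 fun p _ => hpos p.1 p.2
  have hmle : ∀ a b, m ≤ M a b := fun a b =>
    Finset.inf'_le _ (Finset.mem_univ (a, b))
  -- entries stay positive along the perturbation
  have hent : ∀ t : ℝ, |t| < m → ∀ a b, 0 < M a b + t * D a b := by
    intro t ht a b
    have h1 : |t * D a b| ≤ |t| := by
      rw [abs_mul]
      exact mul_le_of_le_one_right (abs_nonneg t) (habs a b)
    have h2 := neg_abs_le (t * D a b)
    have := hmle a b
    linarith
  -- the perturbed objective
  set g : ℝ → ℝ := fun t => ∑ a, ∑ b,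
    (C a b * (M a b + t * D a b)
      + ε * ((M a b + t * D a b) * Real.log (M a b + t * D a b) - (M a b + t * D a b) + 1))
    with hg
  -- derivative of g at 0
  have hterm : ∀ a b, HasDerivAt (fun t : ℝ =>
      C a b * (M a b + t * D a b)
        + ε * ((M a b + t * D a b) * Real.log (M a b + t * D a b) - (M a b + t * D a b) + 1))
      (C a b * D a b + ε * (Real.log (M a b) * D a b)) 0 := by
    intro a b
    have hlin : HasDerivAt (fun t : ℝ => M a b + t * D a b) (D a b) 0 := by
      simpa using ((hasDerivAt_id (0:ℝ)).mul_const (D a b)).const_add (M a b)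
    have hφ : HasDerivAt (fun x : ℝ => x * Real.log x - x + 1)
        (Real.log (M a b)) (M a b + 0 * D a b) := by
      have := ((Real.hasDerivAt_mul_log (hpos a b).ne').sub (hasDerivAt_id (M a b))).add_const (1:ℝ)
      simpa using this
    have hcomp := hφ.comp 0 hlin
    exact (hlin.const_mul (C a b)).add (hcomp.const_mul ε)
  have hgd : HasDerivAt g (∑ a, ∑ b, (C a b * D a b + ε * (Real.log (M a b) * D a b))) 0 :=
    HasDerivAt.fun_sum fun a _ => HasDerivAt.fun_sum fun b _ => hterm a b
  -- g has a local minimum at 0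
  have hloc : IsLocalMin g 0 := by
    unfold IsLocalMin IsMinFilter
    filter_upwards [Metric.ball_mem_nhds (0:ℝ) hm] with t ht
    rw [Metric.mem_ball, Real.dist_eq, sub_zero] at ht
    set N : Matrix (Fin n) (Fin n) ℝ := Matrix.of fun a b => M a b + t * D a b with hN
    have hNpos : ∀ a b, 0 ≤ N a b := fun a b => (hent t ht a b).le
    have hNrow : N.mulVec 1 = M.mulVec 1 := by
      funext a
      simp [hN, Matrix.mulVec, dotProduct, Finset.sum_add_distrib, ← Finset.mul_sum, hrow]
    have hNcol : Nᵀ.mulVec 1 = Mᵀ.mulVec 1 := by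
      funext b
      simp [hN, Matrix.mulVec, dotProduct, Matrix.transpose_apply,
        Finset.sum_add_distrib, ← Finset.mul_sum, hcol]
    have h := hmin N hNpos hNrow hNcol
    have e0 : g 0 = Matrix.trace (Cᵀ * M) + ε * entD M := by
      rw [objEq']; simp [hg]
    have et : g t = Matrix.trace (Cᵀ * N) + ε * entD N := by
      rw [objEq']; simp [hg, hN]
    rw [e0, et]; exact h
  have hzero := hloc.hasDerivAt_eq_zero hgd
  have hrw : (∑ a, ∑ b, (C a b * D a b + ε * (Real.log (M a b) * D a b)))
      = ∑ a, ∑ b, D a b * (C a b + ε * Real.log (M a b)) := by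
    refine Finset.sum_congr rfl fun a _ => Finset.sum_congr rfl fun b _ => by ring
  rw [hrw, hDsum (fun a b => C a b + ε * Real.log (M a b))] at hzero
  linarith

/-- a strictly positive minimizer of the entropy-regularized OMT problem has
the diagonal scaling form `M = diag(u₀) K diag(u₁)` with `K = exp(−C/ε)` entrywise. -/
theorem stmt1 {n : ℕ} (C : Matrix (Fin n) (Fin n) ℝ) (ε : ℝ) (hε : 0 < ε)
    (Φ₀ Φ₁ : Fin n → ℝ) (hΦ₀ : ∀ i, 0 < Φ₀ i) (hΦ₁ : ∀ i, 0 < Φ₁ i)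
    (hmass : ∑ i, Φ₀ i = ∑ i, Φ₁ i)
    (M : Matrix (Fin n) (Fin n) ℝ)
    (hfeas : (∀ i j, 0 ≤ M i j) ∧ M.mulVec 1 = Φ₀ ∧ Mᵀ.mulVec 1 = Φ₁)
    (hmin : ∀ N : Matrix (Fin n) (Fin n) ℝ, (∀ i j, 0 ≤ N i j) →
      N.mulVec 1 = Φ₀ → Nᵀ.mulVec 1 = Φ₁ →
      Matrix.trace (Cᵀ * M) + ε * entD M ≤ Matrix.trace (Cᵀ * N) + ε * entD N)
    (hpos : ∀ i j, 0 < M i j) :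
    ∃ u₀ u₁ : Fin n → ℝ, (∀ i, 0 < u₀ i) ∧ (∀ i, 0 < u₁ i) ∧
      M = Matrix.diagonal u₀ * (Matrix.of fun i j => Real.exp (-C i j / ε))
            * Matrix.diagonal u₁ := by
  rcases Nat.eq_zero_or_pos n with hn | hn
  · subst hn
    exact ⟨fun i => 1, fun i => 1, fun i => one_pos, fun i => one_pos,
      by ext a b; exact a.elim0⟩
  obtain ⟨h0, hrow, hcol⟩ := hfeas
  have hmin' : ∀ N : Matrix (Fin n) (Fin n) ℝ, (∀ a b, 0 ≤ N a b) →
      N.mulVec 1 = M.mulVec 1 → Nᵀ.mulVec 1 = Mᵀ.mulVec 1 →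
      Matrix.trace (Cᵀ * M) + ε * entD M ≤ Matrix.trace (Cᵀ * N) + ε * entD N := by
    intro N hN h1 h2
    exact hmin N hN (by rw [h1, hrow]) (by rw [h2, hcol])
  set z : Fin n := ⟨0, hn⟩
  set lam : Fin n → Fin n → ℝ := fun a b => C a b + ε * Real.log (M a b) with hlam
  have hkey : ∀ a b, lam a b + lam z z = lam a z + lam z b := fun a b =>
    keylem' C ε M hpos hmin' a z b z
  refine ⟨fun a => Real.exp ((lam a z - lam z z) / ε), fun b => Real.exp (lam z b / ε),
    fun a => Real.exp_pos _, fun b => Real.exp_pos _, ?_⟩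
  ext a b
  rw [Matrix.mul_diagonal, Matrix.diagonal_mul, Matrix.of_apply]
  rw [← Real.exp_add, ← Real.exp_add]
  have hM : M a b = Real.exp (Real.log (M a b)) := (Real.exp_log (hpos a b)).symm
  rw [hM]
  congr 1
  have h := hkey a b
  field_simp
  simp only [hlam] at h ⊢
  ring_nf
  ring_nf at h
  linarith
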